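/- Let Σ' = Σ'_i × Σ'_{-i} ⊆ Σ and σ ∈ Σ'_i. Then σ is not conditionally dominated on Σ' if and only if for each information set I of player i, either Σ'_{σ,I,-i} = ∅ or there is a probability distribution μ_{σ,I} on Σ'_{σ,I,-i} such that for every strategy σ' ∈ Σ_i that agrees with σ at every information set of player i preceding I, Σ_{τ_{-i} ∈ Σ'_{σ,I,-i}} μ_{σ,I}(τ_{-i}) u_i(σ, τ_{-i}) ≥ Σ_{τ_{-i} ∈ Σ'_{σ,I,-i}} μ_{σ,I}(τ_{-i}) u_i(σ', τ_{-i}). -/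

import Mathlib

open scoped BigOperators

noncomputable section

/-- A probability distribution on a finite type, represented as a weight function. -/
def IsDist {α : Type*} [Fintype α] (p : α → ℝ) : Prop :=
  (∀ a, 0 ≤ p a) ∧ ∑ a, p a = 1

/-- The probability of a set under a weight function. -/
def probOf {α : Type*} [Fintype α] (p : α → ℝ) (E : Set α) : ℝ :=
  ∑ a, E.indicator p a

/-- A lexicographic probability sequence on a finite type. -/
structure LPS (Ω : Type*) [Fintype Ω] where
  m : ℕ
  μ : Fin (m + 1) → Ω → ℝ
  dist : ∀ ℓ, IsDist (μ ℓ)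

namespace LPS

variable {Ω : Type*} [Fintype Ω]

open Classical in
/-- `(μ⃗(V | E))₀`: the conditional probability of `V` given `E` under the first measure
of the LPS that gives `E` positive probability (0 if there is none). -/
def condFirst (L : LPS Ω) (V E : Set Ω) : ℝ :=
  if h : ∃ ℓ : ℕ, ∃ hℓ : ℓ < L.m + 1, 0 < probOf (L.μ ⟨ℓ, hℓ⟩) E then
    probOf (L.μ ⟨Nat.find h, (Nat.find_spec h).choose⟩) (V ∩ E) /
      probOf (L.μ ⟨Nat.find h, (Nat.find_spec h).choose⟩) E
  else 0

/-- Expectation of `f` under the first measure of `μ⃗|E`. -/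
def condExp (L : LPS Ω) (E : Set Ω) (f : Ω → ℝ) : ℝ :=
  ∑ a, L.condFirst {a} E * f a

end LPS

/-- The experience of player `i` along a history: the sequence of information-set labels of
`i` visited together with the actions `i` took there. `experGo owner label i pre rest`
processes the history `pre ++ rest`, where `pre` has already been traversed. -/
def experGo {Act Lab ι : Type*} [DecidableEq ι] (owner : List Act → ι)
    (label : List Act → Lab) (i : ι) : List Act → List Act → List (Lab × Act)
  | _, [] => []
  | pre, a :: rest =>
      (if owner pre = i then [(label pre, a)] else []) ++
        experGo owner label i (pre ++ [a]) rest

/-- A finite extensive-form game with perfect recall for `n` players and no chance moves,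
presented via its set of histories (sequences of actions from the root). `owner h` is the
player who moves at a nonterminal history `h`, `label h` is the information set containing
`h`, and `payoff i h` is `i`'s utility at a terminal history `h`. -/
structure ExtGame (n : ℕ) where
  Act : Type
  Lab : Type
  actFin : Fintype Act
  actDeq : DecidableEq Act
  actNe : Nonempty Act
  labFin : Fintype Lab
  labDeq : DecidableEq Lab
  maxLen : ℕ
  H : Set (List Act)
  root_mem : [] ∈ H
  prefix_closed : ∀ (h : List Act) (a : Act), h ++ [a] ∈ H → h ∈ H
  len_bound : ∀ h ∈ H, h.length ≤ maxLen
  owner : List Act → Fin n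
  label : List Act → Lab
  payoff : Fin n → List Act → ℝ
  payoff_mem : ∀ (i : Fin n) (h : List Act), h ∈ H → (∀ a, h ++ [a] ∉ H) →
    payoff i h ∈ Set.Icc (0 : ℝ) 1
  same_owner : ∀ h h', h ∈ H → h' ∈ H → (∃ a, h ++ [a] ∈ H) → (∃ a, h' ++ [a] ∈ H) →
    label h = label h' → owner h = owner h'
  same_actions : ∀ h h', h ∈ H → h' ∈ H → (∃ a, h ++ [a] ∈ H) → (∃ a, h' ++ [a] ∈ H) →
    label h = label h' → ∀ a, (h ++ [a] ∈ H ↔ h' ++ [a] ∈ H)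
  no_two_on_path : ∀ h h', h ∈ H → h' ∈ H → (∃ a, h ++ [a] ∈ H) → (∃ a, h' ++ [a] ∈ H) →
    label h = label h' → h <+: h' → h = h'
  perfect_recall : ∀ h h', h ∈ H → h' ∈ H → (∃ a, h ++ [a] ∈ H) → (∃ a, h' ++ [a] ∈ H) →
    label h = label h' →
    experGo owner label (owner h) [] h = experGo owner label (owner h) [] h'

attribute [instance] ExtGame.actFin ExtGame.actDeq ExtGame.actNe ExtGame.labFin
  ExtGame.labDeq

namespace ExtGame

variable {n : ℕ}

/-- `h` is a decision node. -/
def Dec (G : ExtGame n) (h : List G.Act) : Prop := h ∈ G.H ∧ ∃ a, h ++ [a] ∈ G.H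

/-- `h` is a decision node of player `i`. -/
def DecOf (G : ExtGame n) (i : Fin n) (h : List G.Act) : Prop := G.Dec h ∧ G.owner h = i

/-- `c` is (the label of) an information set of player `i`. -/
def IsInfo (G : ExtGame n) (i : Fin n) (c : G.Lab) : Prop :=
  ∃ h, G.DecOf i h ∧ G.label h = c

/-- A pure strategy of player `i`: an assignment of an available action to each
information set of `i`. -/
def PStrat (G : ExtGame n) (i : Fin n) : Type :=
  {s : G.Lab → G.Act // ∀ h, G.DecOf i h → h ++ [s (G.label h)] ∈ G.H}

instance (G : ExtGame n) (i : Fin n) : Finite (G.PStrat i) := Subtype.finite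

noncomputable instance (G : ExtGame n) (i : Fin n) : Fintype (G.PStrat i) :=
  Fintype.ofFinite _

noncomputable instance (G : ExtGame n) (i : Fin n) : DecidableEq (G.PStrat i) :=
  Classical.decEq _

/-- Opponents' pure-strategy profiles. -/
abbrev OppProf (G : ExtGame n) (i : Fin n) : Type :=
  (j : {j : Fin n // j ≠ i}) → G.PStrat j.val

/-- Combining a strategy for `i` with an opponents' profile. -/
def combine (G : ExtGame n) (i : Fin n) (s : G.PStrat i) (τ : G.OppProf i) :
    (j : Fin n) → G.PStrat j :=
  fun j => if h : j = i then cast (congrArg G.PStrat h.symm) s else τ ⟨j, h⟩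

open Classical in
/-- The play of the game from history `h` under profile `sp`, with fuel `f`. -/
def playFrom (G : ExtGame n) (sp : (j : Fin n) → G.PStrat j) :
    ℕ → List G.Act → List G.Act
  | 0, h => h
  | f + 1, h =>
      if G.Dec h then
        G.playFrom sp f (h ++ [(sp (G.owner h)).val (G.label h)])
      else h

/-- The terminal history reached by the profile `sp`. -/
def outcome (G : ExtGame n) (sp : (j : Fin n) → G.PStrat j) : List G.Act :=
  G.playFrom sp (G.maxLen + 1) []

/-- Player `i`'s utility under the profile `sp`. -/
def U (G : ExtGame n) (i : Fin n) (sp : (j : Fin n) → G.PStrat j) : ℝ :=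
  G.payoff i (G.outcome sp)

/-- The profile `sp` reaches the information set `c` of player `i`. -/
def Reaches (G : ExtGame n) (sp : (j : Fin n) → G.PStrat j) (i : Fin n) (c : G.Lab) :
    Prop :=
  ∃ p, p <+: G.outcome sp ∧ G.DecOf i p ∧ G.label p = c

/-- `Σ'_{σ,I,-i}`: the opponents' profiles in `T` for which `(σ, τ₋ᵢ)` reaches `c`. -/
def ReachSet (G : ExtGame n) (i : Fin n) (σ : G.PStrat i) (c : G.Lab)
    (T : Set (G.OppProf i)) : Set (G.OppProf i) :=
  {τ ∈ T | G.Reaches (G.combine i σ τ) i c}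

/-- `Σ'_{σ,σ',I,-i}` for a mixed strategy `m`. -/
def ReachSetMix (G : ExtGame n) (i : Fin n) (σ : G.PStrat i) (m : G.PStrat i → ℝ)
    (c : G.Lab) (T : Set (G.OppProf i)) : Set (G.OppProf i) :=
  {τ ∈ T | G.Reaches (G.combine i σ τ) i c ∧
    ∀ s, 0 < m s → G.Reaches (G.combine i s τ) i c}

/-- Utility of the mixed strategy `m` of player `i` against the opponents' profile `τ`. -/
def EUmixE (G : ExtGame n) (i : Fin n) (m : G.PStrat i → ℝ) (τ : G.OppProf i) : ℝ :=
  ∑ s : G.PStrat i, m s * G.U i (G.combine i s τ)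

/-- `σ` is conditionally dominated on `Σ'_i × T`. -/
def CondDom (G : ExtGame n) (i : Fin n) (σ : G.PStrat i) (T : Set (G.OppProf i)) :
    Prop :=
  ∃ c, G.IsInfo i c ∧ ∃ m : G.PStrat i → ℝ, IsDist m ∧
    (G.ReachSetMix i σ m c T).Nonempty ∧
    ∀ τ ∈ G.ReachSetMix i σ m c T, G.U i (G.combine i σ τ) < G.EUmixE i m τ

/-- The information set `c'` of player `i` is at or below `c`. -/
def AtOrBelow (G : ExtGame n) (i : Fin n) (c' c : G.Lab) : Prop :=
  ∃ h h', G.DecOf i h ∧ G.DecOf i h' ∧ G.label h' = c ∧ G.label h = c' ∧ h' <+: h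

/-- The information set `c'` of player `i` precedes `c`. -/
def Precedes (G : ExtGame n) (i : Fin n) (c' c : G.Lab) : Prop :=
  ∃ h h', G.DecOf i h ∧ G.DecOf i h' ∧ G.label h = c' ∧ G.label h' = c ∧
    h <+: h' ∧ h ≠ h'

/-- `σ` is conditionally dominated′ on `Σ'_i × T`. -/
def CondDom' (G : ExtGame n) (i : Fin n) (σ : G.PStrat i) (T : Set (G.OppProf i)) :
    Prop :=
  ∃ c, G.IsInfo i c ∧ (G.ReachSet i σ c T).Nonempty ∧
    ∃ m : G.PStrat i → ℝ, IsDist m ∧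
      (∀ s, 0 < m s → ∀ c', G.IsInfo i c' → ¬G.AtOrBelow i c' c →
        s.val c' = σ.val c') ∧
      ∀ τ ∈ G.ReachSet i σ c T, G.U i (G.combine i σ τ) < G.EUmixE i m τ

/-- `σ` is weakly dominated by the mixed strategy `m` with respect to `T`. -/
def WDomE (G : ExtGame n) (i : Fin n) (m : G.PStrat i → ℝ) (σ : G.PStrat i)
    (T : Set (G.OppProf i)) : Prop :=
  (∀ τ ∈ T, G.U i (G.combine i σ τ) ≤ G.EUmixE i m τ) ∧
    ∃ τ ∈ T, G.U i (G.combine i σ τ) < G.EUmixE i m τ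

/-- `σ` is an almost-best response conditional on reaching the information set `c` to the
first measure of `L | E`. -/
def AlmostBestAt (G : ExtGame n) (i : Fin n) (σ : G.PStrat i) (c : G.Lab)
    (L : LPS (G.OppProf i)) (E : Set (G.OppProf i)) : Prop :=
  ∀ σ' : G.PStrat i,
    (∀ c', G.IsInfo i c' → G.Precedes i c' c → σ'.val c' = σ.val c') →
    L.condExp E (fun τ => G.U i (G.combine i σ' τ)) ≤
      L.condExp E (fun τ => G.U i (G.combine i σ τ))

end ExtGame

end

noncomputable section Aux

namespace ExtGame

variable {n : ℕ} (G : ExtGame n)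

lemma mem_H_of_prefix : ∀ {p h : List G.Act}, h <+: p → p ∈ G.H → h ∈ G.H := by
  intro p
  induction p using List.reverseRecOn with
  | nil => intro h hp hH; rw [List.prefix_nil] at hp; exact hp ▸ hH
  | append_singleton q a ih =>
    intro h hp hH
    rcases List.prefix_concat_iff.mp hp with h1 | h2
    · exact h1 ▸ hH
    · exact ih h2 (G.prefix_closed q a hH)

lemma playFrom_prefix (sp : (j : Fin n) → G.PStrat j) :
    ∀ (f : ℕ) (h : List G.Act), h <+: G.playFrom sp f h := by
  intro f
  induction f with
  | zero => intro h; rw [playFrom]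
  | succ f ih =>
    intro h
    rw [playFrom]
    split
    · exact (List.prefix_append h _).trans (ih _)
    · exact List.prefix_rfl

lemma prefix_playFrom (sp : (j : Fin n) → G.PStrat j) (p : List G.Act) (hp : p ∈ G.H)
    (hact : ∀ k (hk : k < p.length),
      (sp (G.owner (p.take k))).val (G.label (p.take k)) = p[k]'hk) :
    ∀ (f : ℕ) (h : List G.Act), h <+: p → p.length ≤ h.length + f →
      p <+: G.playFrom sp f h := by
  intro f
  induction f with
  | zero =>
    intro h hh hlen
    have heq : h = p := List.IsPrefix.eq_of_length_le hh (by omega)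
    rw [playFrom, heq]
  | succ f ih =>
    intro h hh hlen
    by_cases he : h = p
    · exact he ▸ G.playFrom_prefix sp (f + 1) h
    · have hlt : h.length < p.length :=
        lt_of_le_of_ne hh.length_le
          (fun e => he (List.IsPrefix.eq_of_length_le hh (le_of_eq e.symm)))
      have htake : p.take h.length = h := (List.prefix_iff_eq_take.mp hh).symm
      have hnext : h ++ [p[h.length]'hlt] <+: p := by
        have h1 := List.take_concat_get hlt
        rw [htake, List.concat_eq_append] at h1
        rw [h1]
        exact List.take_prefix _ _
      have hH' : h ++ [p[h.length]'hlt] ∈ G.H := G.mem_H_of_prefix hnext hp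
      have hdec : G.Dec h := ⟨G.mem_H_of_prefix hh hp, ⟨_, hH'⟩⟩
      rw [playFrom, if_pos hdec]
      have hact' : (sp (G.owner h)).val (G.label h) = p[h.length]'hlt := by
        have := hact h.length hlt
        rwa [htake] at this
      rw [hact']
      refine ih (h ++ [p[h.length]'hlt]) hnext ?_
      rw [List.length_append, List.length_singleton]
      omega

lemma playFrom_invariant (sp : (j : Fin n) → G.PStrat j) :
    ∀ (f : ℕ) (h : List G.Act), h ∈ G.H →
      G.playFrom sp f h ∈ G.H ∧
      ∀ k (hk : k < (G.playFrom sp f h).length), h.length ≤ k →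
        (sp (G.owner ((G.playFrom sp f h).take k))).val
            (G.label ((G.playFrom sp f h).take k)) =
          (G.playFrom sp f h)[k]'hk := by
  intro f
  induction f with
  | zero =>
    intro h hH
    rw [playFrom]
    exact ⟨hH, fun k hk hk' => by omega⟩
  | succ f ih =>
    intro h hH
    by_cases hdec : G.Dec h
    · rw [playFrom, if_pos hdec]
      set b := (sp (G.owner h)).val (G.label h) with hb
      have hH' : h ++ [b] ∈ G.H := (sp (G.owner h)).2 h ⟨hdec, rfl⟩
      obtain ⟨hmem, hactIH⟩ := ih (h ++ [b]) hH'
      refine ⟨hmem, fun k hk hk' => ?_⟩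
      rcases Nat.eq_or_lt_of_le hk' with heq | hlt
      · subst heq
        have hpre : h ++ [b] <+: G.playFrom sp f (h ++ [b]) := G.playFrom_prefix sp f _
        have hpre2 : h <+: G.playFrom sp f (h ++ [b]) :=
          (List.prefix_append h [b]).trans hpre
        have htake : (G.playFrom sp f (h ++ [b])).take h.length = h :=
          (List.prefix_iff_eq_take.mp hpre2).symm
        have hget : (G.playFrom sp f (h ++ [b]))[h.length]'hk = b := by
          have h1 : h.length < (h ++ [b]).length := by simp
          have h2 := hpre.getElem (i := h.length) h1
          rw [← h2]
          simp
        rw [htake, hget]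
      · refine hactIH k hk ?_
        rw [List.length_append, List.length_singleton]
        omega
    · rw [playFrom, if_neg hdec]
      exact ⟨hH, fun k hk hk' => by omega⟩

lemma outcome_mem (sp : (j : Fin n) → G.PStrat j) : G.outcome sp ∈ G.H :=
  (G.playFrom_invariant sp (G.maxLen + 1) [] G.root_mem).1

lemma outcome_act (sp : (j : Fin n) → G.PStrat j) (k : ℕ) (hk : k < (G.outcome sp).length) :
    (sp (G.owner ((G.outcome sp).take k))).val (G.label ((G.outcome sp).take k)) =
      (G.outcome sp)[k]'hk :=
  (G.playFrom_invariant sp (G.maxLen + 1) [] G.root_mem).2 k hk (Nat.zero_le k)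

lemma act_of_prefix_outcome (sp : (j : Fin n) → G.PStrat j) (p : List G.Act)
    (hp : p <+: G.outcome sp) (k : ℕ) (hk : k < p.length) :
    (sp (G.owner (p.take k))).val (G.label (p.take k)) = p[k]'hk := by
  have hko : k < (G.outcome sp).length := lt_of_lt_of_le hk hp.length_le
  have ht : p.take k = (G.outcome sp).take k := by
    rw [List.prefix_iff_eq_take.mp hp, List.take_take, min_eq_left hk.le]
  have hg : p[k]'hk = (G.outcome sp)[k]'hko := hp.getElem hk
  rw [ht, hg]
  exact G.outcome_act sp k hko

lemma prefix_outcome (sp : (j : Fin n) → G.PStrat j) (p : List G.Act) (hp : p ∈ G.H)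
    (hact : ∀ k (hk : k < p.length),
      (sp (G.owner (p.take k))).val (G.label (p.take k)) = p[k]'hk) :
    p <+: G.outcome sp :=
  G.prefix_playFrom sp p hp hact (G.maxLen + 1) [] (List.nil_prefix)
    (by have := G.len_bound p hp; simp; omega)

lemma combine_same (i : Fin n) (s : G.PStrat i) (τ : G.OppProf i) :
    G.combine i s τ i = s := by
  simp [combine]

lemma combine_ne (i : Fin n) (s : G.PStrat i) (τ : G.OppProf i) (j : Fin n) (hj : j ≠ i) :
    G.combine i s τ j = τ ⟨j, hj⟩ := by
  simp [combine, hj]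

/-- `s` matches the actions taken by player `i` along `p`. -/
def MatchAt (i : Fin n) (s : G.PStrat i) (p : List G.Act) : Prop :=
  ∀ k (hk : k < p.length), G.owner (p.take k) = i →
    s.val (G.label (p.take k)) = p[k]'hk

lemma matchAt_of_prefix_outcome (i : Fin n) (s : G.PStrat i) (τ : G.OppProf i)
    (p : List G.Act) (hp : p <+: G.outcome (G.combine i s τ)) : G.MatchAt i s p := by
  intro k hk ho
  have := G.act_of_prefix_outcome (G.combine i s τ) p hp k hk
  rwa [ho, combine_same] at this

lemma experGo_mem_iff {Act Lab ι : Type*} [DecidableEq ι] (owner : List Act → ι)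
    (label : List Act → Lab) (i : ι) :
    ∀ (rest pre : List Act) (l : Lab) (a : Act),
      (l, a) ∈ experGo owner label i pre rest ↔
        ∃ k, ∃ hk : k < rest.length, owner (pre ++ rest.take k) = i ∧
          label (pre ++ rest.take k) = l ∧ rest[k]'hk = a := by
  intro rest
  induction rest with
  | nil => intro pre l a; simp [experGo]
  | cons b rest ih =>
    intro pre l a
    rw [experGo]
    rw [List.mem_append]
    constructor
    · rintro (h1 | h2)
      · by_cases ho : owner pre = i
        · rw [if_pos ho] at h1
          simp only [List.mem_singleton, Prod.mk.injEq] at h1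
          exact ⟨0, by simp, by simpa using ho, by simpa using h1.1.symm,
            by simpa using h1.2.symm⟩
        · rw [if_neg ho] at h1
          simp at h1
      · obtain ⟨k, hk, h₁, h₂, h₃⟩ := (ih (pre ++ [b]) l a).mp h2
        refine ⟨k + 1, by simpa using Nat.succ_lt_succ hk, ?_, ?_, ?_⟩
        · rwa [List.take_succ_cons,
            show pre ++ b :: rest.take k = pre ++ [b] ++ rest.take k by simp]
        · rwa [List.take_succ_cons,
            show pre ++ b :: rest.take k = pre ++ [b] ++ rest.take k by simp]
        · simpa using h₃
    · rintro ⟨k, hk, h₁, h₂, h₃⟩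
      cases k with
      | zero =>
        left
        simp only [List.take_zero, List.append_nil] at h₁ h₂
        rw [if_pos h₁]
        simp only [List.mem_singleton, Prod.mk.injEq]
        exact ⟨h₂.symm, by simpa using h₃.symm⟩
      | succ k =>
        right
        refine (ih (pre ++ [b]) l a).mpr ⟨k, by simpa using hk, ?_, ?_, ?_⟩
        · rwa [List.take_succ_cons,
            show pre ++ b :: rest.take k = pre ++ [b] ++ rest.take k by simp] at h₁
        · rwa [List.take_succ_cons,
            show pre ++ b :: rest.take k = pre ++ [b] ++ rest.take k by simp] at h₂
        · simpa using h₃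

lemma matchAt_congr (i : Fin n) (s : G.PStrat i) (p q : List G.Act)
    (hx : experGo G.owner G.label i [] p = experGo G.owner G.label i [] q)
    (hm : G.MatchAt i s p) : G.MatchAt i s q := by
  intro k hk ho
  have hmem : (G.label (q.take k), q[k]'hk) ∈ experGo G.owner G.label i [] q :=
    (experGo_mem_iff G.owner G.label i q [] _ _).mpr
      ⟨k, hk, by simpa using ho, by simp, rfl⟩
  rw [← hx] at hmem
  obtain ⟨k', hk', ho', hl', ha'⟩ := (experGo_mem_iff G.owner G.label i p [] _ _).mp hmem
  simp only [List.nil_append] at ho' hl'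
  have := hm k' hk' ho'
  rw [hl'] at this
  rw [this, ha']

lemma experGo_eq (i : Fin n) (p q : List G.Act) (hp : G.DecOf i p) (hq : G.DecOf i q)
    (hl : G.label p = G.label q) :
    experGo G.owner G.label i [] p = experGo G.owner G.label i [] q := by
  have := G.perfect_recall p q hp.1.1 hq.1.1 hp.1.2 hq.1.2 hl
  rwa [hp.2] at this

lemma dec_take (p : List G.Act) (hp : p ∈ G.H) (k : ℕ) (hk : k < p.length) :
    G.Dec (p.take k) := by
  refine ⟨G.mem_H_of_prefix (List.take_prefix k p) hp, ⟨p[k]'hk, ?_⟩⟩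
  apply G.mem_H_of_prefix _ hp
  have h1 := List.take_concat_get hk
  rw [List.concat_eq_append] at h1
  rw [h1]
  exact List.take_prefix _ _

lemma reach_prefix_of_matchAt (i : Fin n) (σ s : G.PStrat i) (τ : G.OppProf i)
    (p : List G.Act) (hp : p <+: G.outcome (G.combine i σ τ)) (hm : G.MatchAt i s p) :
    p <+: G.outcome (G.combine i s τ) := by
  apply G.prefix_outcome
  · exact G.mem_H_of_prefix hp (G.outcome_mem _)
  · intro k hk
    by_cases ho : G.owner (p.take k) = i
    · rw [ho, combine_same]
      exact hm k hk ho
    · rw [G.combine_ne i s τ _ ho, ← G.combine_ne i σ τ _ ho]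
      exact G.act_of_prefix_outcome _ p hp k hk

lemma reaches_of_matchAt (i : Fin n) (σ s : G.PStrat i) (c : G.Lab) (P : List G.Act)
    (hPdec : G.DecOf i P) (hPlab : G.label P = c) (hs : G.MatchAt i s P)
    (τ : G.OppProf i) (hτ : G.Reaches (G.combine i σ τ) i c) :
    G.Reaches (G.combine i s τ) i c := by
  obtain ⟨q, hqpre, hqdec, hqlab⟩ := hτ
  have hx : experGo G.owner G.label i [] P = experGo G.owner G.label i [] q :=
    G.experGo_eq i P q hPdec hqdec (by rw [hPlab, hqlab])
  have hmq : G.MatchAt i s q := G.matchAt_congr i s P q hx hs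
  exact ⟨q, G.reach_prefix_of_matchAt i σ s τ q hqpre hmq, hqdec, hqlab⟩

lemma matchAt_of_reaches (i : Fin n) (s : G.PStrat i) (c : G.Lab) (P : List G.Act)
    (hPdec : G.DecOf i P) (hPlab : G.label P = c) (τ : G.OppProf i)
    (hτ : G.Reaches (G.combine i s τ) i c) : G.MatchAt i s P := by
  obtain ⟨q, hqpre, hqdec, hqlab⟩ := hτ
  have hmq : G.MatchAt i s q := G.matchAt_of_prefix_outcome i s τ q hqpre
  have hx : experGo G.owner G.label i [] q = experGo G.owner G.label i [] P :=
    G.experGo_eq i q P hqdec hPdec (by rw [hPlab, hqlab])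
  exact G.matchAt_congr i s q P hx hmq

lemma matchAt_of_agree (i : Fin n) (σ σ' : G.PStrat i) (c : G.Lab) (P : List G.Act)
    (hPdec : G.DecOf i P) (hPlab : G.label P = c) (hmσ : G.MatchAt i σ P)
    (hag : ∀ c', G.IsInfo i c' → G.Precedes i c' c → σ'.val c' = σ.val c') :
    G.MatchAt i σ' P := by
  intro k hk ho
  have hdq : G.DecOf i (P.take k) := ⟨G.dec_take P hPdec.1.1 k hk, ho⟩
  have hinfo : G.IsInfo i (G.label (P.take k)) := ⟨P.take k, hdq, rfl⟩
  have hne : P.take k ≠ P := fun e => by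
    have := congrArg List.length e
    rw [List.length_take] at this
    omega
  have hprec : G.Precedes i (G.label (P.take k)) c :=
    ⟨P.take k, P, hdq, hPdec, rfl, hPlab, List.take_prefix k P, hne⟩
  rw [hag _ hinfo hprec]
  exact hmσ k hk ho

lemma agree_of_matchAt (i : Fin n) (σ s : G.PStrat i) (c : G.Lab) (P : List G.Act)
    (hPdec : G.DecOf i P) (hPlab : G.label P = c) (hmσ : G.MatchAt i σ P)
    (hms : G.MatchAt i s P) :
    ∀ c', G.IsInfo i c' → G.Precedes i c' c → s.val c' = σ.val c' := by
  intro c' _ hprec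
  obtain ⟨h, h', hdh, hdh', hlh, hlh', hpre, hne⟩ := hprec
  have hx : experGo G.owner G.label i [] h' = experGo G.owner G.label i [] P :=
    G.experGo_eq i h' P hdh' hPdec (by rw [hlh', hPlab])
  have hlen : h.length < h'.length :=
    lt_of_le_of_ne hpre.length_le
      (fun e => hne (List.IsPrefix.eq_of_length_le hpre (le_of_eq e.symm)))
  have htk : h'.take h.length = h := (List.prefix_iff_eq_take.mp hpre).symm
  have hmem : (c', h'[h.length]'hlen) ∈ experGo G.owner G.label i [] h' :=
    (experGo_mem_iff G.owner G.label i h' [] c' _).mpr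
      ⟨h.length, hlen, by simpa [htk] using hdh.2, by simpa [htk] using hlh, rfl⟩
  rw [hx] at hmem
  obtain ⟨k, hk, ho, hl, _⟩ := (experGo_mem_iff G.owner G.label i P [] c' _).mp hmem
  simp only [List.nil_append] at ho hl
  rw [← hl]
  exact (hms k hk ho).trans (hmσ k hk ho).symm

end ExtGame

open Classical in
theorem pearce {Si Om : Type} [Fintype Si] [Fintype Om] (S : Set Si) (E : Set Om)
    (hS : S.Nonempty) (hE : E.Nonempty) (A : Si → Om → ℝ)
    (hno : ¬ ∃ m : Si → ℝ, IsDist m ∧ (∀ s, 0 < m s → s ∈ S) ∧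
      ∀ τ ∈ E, 0 < ∑ s, m s * A s τ) :
    ∃ μ : Om → ℝ, IsDist μ ∧ (∀ τ, 0 < μ τ → τ ∈ E) ∧ ∀ s ∈ S, ∑ τ, μ τ * A s τ ≤ 0 := by
  classical
  set C : Set (Om → ℝ) := {x | ∃ m : Si → ℝ, IsDist m ∧ (∀ s, 0 < m s → s ∈ S) ∧
    x = fun τ => ∑ s, m s * A s τ} with hC
  set P : Set (Om → ℝ) := {x | ∀ τ ∈ E, 0 < x τ} with hP
  have hdelta : ∀ s₀ ∈ S, (fun τ => A s₀ τ) ∈ C := by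
    intro s₀ hs₀
    refine ⟨fun s => if s = s₀ then 1 else 0, ⟨fun s => by positivity, by simp⟩,
      fun s hs => ?_, ?_⟩
    · by_cases h : s = s₀
      · exact h ▸ hs₀
      · simp [h] at hs
    · funext τ; simp
  have hCne : C.Nonempty := ⟨_, hdelta hS.choose hS.choose_spec⟩
  have hPopen : IsOpen P := by
    have : P = ⋂ τ ∈ E, {x : Om → ℝ | 0 < x τ} := by ext x; simp [hP]
    rw [this]
    exact Set.Finite.isOpen_biInter (Set.toFinite E)
      (fun τ _ => isOpen_lt continuous_const (continuous_apply τ))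
  have hPconv : Convex ℝ P := by
    intro x hx y hy a b ha hb hab
    intro τ hτ
    have hxirw : (a • x + b • y) τ = a * x τ + b * y τ := by simp
    rw [Set.mem_setOf_eq] at hx hy
    rcases ha.eq_or_lt with h | h
    · have hb1 : b = 1 := by linarith
      rw [hxirw, ← h, hb1]
      have := hy τ hτ; linarith
    · rw [hxirw]
      have h1 : 0 < a * x τ := mul_pos h (hx τ hτ)
      have h2 : 0 ≤ b * y τ := mul_nonneg hb (hy τ hτ).le
      linarith
  have hCconv : Convex ℝ C := by
    rintro x ⟨m, hm, hms, rfl⟩ y ⟨m', hm', hms', rfl⟩ a b ha hb hab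
    refine ⟨fun s => a * m s + b * m' s,
      ⟨fun s => by have := hm.1 s; have := hm'.1 s; positivity, ?_⟩, ?_, ?_⟩
    · rw [Finset.sum_add_distrib, ← Finset.mul_sum, ← Finset.mul_sum, hm.2, hm'.2]
      simpa using hab
    · intro s hs
      rcases lt_or_ge 0 (m s) with h | h
      · exact hms s h
      · have hm0 : m s = 0 := le_antisymm h (hm.1 s)
        have h2 : 0 < b * m' s := by
          have hs' : 0 < a * m s + b * m' s := hs
          rw [hm0, mul_zero, zero_add] at hs'; exact hs'
        have h3 : 0 < m' s := by
          rcases mul_pos_iff.mp h2 with ⟨_, h4⟩ | ⟨h4, _⟩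
          · exact h4
          · exact absurd h4 (not_lt.mpr hb)
        exact hms' s h3
    · funext τ
      simp only [Pi.add_apply, Pi.smul_apply, smul_eq_mul]
      rw [Finset.mul_sum, Finset.mul_sum, ← Finset.sum_add_distrib]
      exact Finset.sum_congr rfl fun s _ => by ring
  have hdisj : Disjoint P C := by
    rw [Set.disjoint_left]
    rintro x hxP ⟨m, hm, hms, rfl⟩
    exact hno ⟨m, hm, hms, fun τ hτ => by simpa using hxP τ hτ⟩
  obtain ⟨f, u, hfP, hfC⟩ := geometric_hahn_banach_open hPconv hPopen hCconv hdisj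
  set e : Om → Om → ℝ := fun τ => Pi.single τ (1:ℝ) with he
  set c : Om → ℝ := fun τ => f (e τ) with hc
  have hrepr : ∀ x : Om → ℝ, f x = ∑ τ, x τ * c τ := by
    intro x
    have hx : x = ∑ τ, x τ • e τ := by
      funext τ'
      simp [he, Finset.sum_apply, Pi.single_apply]
    rw [show f x = f (∑ τ, x τ • e τ) by rw [← hx], map_sum]
    simp only [map_smul, smul_eq_mul, hc]
  -- the indicator of E
  set ind : Om → ℝ := fun τ => if τ ∈ E then 1 else 0 with hind
  have hindP : ∀ ε : ℝ, 0 < ε → (ε • ind) ∈ P := by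
    intro ε hε τ hτ
    simp [hind, hτ, hε]
  have hu0 : 0 ≤ u := by
    by_contra hu
    push_neg at hu
    have key : ∀ ε : ℝ, 0 < ε → ε * f ind < u := by
      intro ε hε
      have := hfP _ (hindP ε hε)
      rwa [map_smul, smul_eq_mul] at this
    have h1 : f ind < u := by simpa using key 1 one_pos
    have hfi : f ind < 0 := lt_trans h1 hu
    have hε : 0 < u / (2 * f ind) := div_pos_of_neg_of_neg hu (by linarith)
    have h2 := key _ hε
    have hfi' : f ind ≠ 0 := ne_of_lt hfi
    have h3 : u / (2 * f ind) * f ind = u / 2 := by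
      field_simp
    rw [h3] at h2
    linarith
  -- coefficients outside E vanish
  have hout : ∀ τ, τ ∉ E → c τ = 0 := by
    intro τ hτ
    by_contra hcτ
    have hmem : ∀ t : ℝ, (ind + t • e τ) ∈ P := by
      intro t τ' hτ'
      have hne : τ' ≠ τ := fun h => hτ (h ▸ hτ')
      simp [hind, he, hτ', Pi.single_eq_of_ne hne]
    have hval : ∀ t : ℝ, f ind + t * c τ < u := by
      intro t
      have := hfP _ (hmem t)
      rwa [map_add, map_smul, smul_eq_mul] at this
    have := hval ((u - f ind) / c τ)
    rw [div_mul_cancel₀ _ hcτ] at this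
    linarith
  -- coefficients inside E are ≤ 0
  have hin : ∀ τ, τ ∈ E → c τ ≤ 0 := by
    intro τ hτ
    by_contra hcτ
    push_neg at hcτ
    have hmem : ∀ t : ℝ, 0 ≤ t → (ind + t • e τ) ∈ P := by
      intro t ht τ' hτ'
      by_cases hne : τ' = τ
      · subst hne
        have : (ind + t • e τ') τ' = 1 + t := by
          simp [hind, he, hτ', Pi.single_eq_same]
        rw [this]; linarith
      · simp [hind, he, hτ', Pi.single_eq_of_ne hne]
    set t₀ : ℝ := max 0 ((u - f ind) / c τ) with ht₀
    have hval : f ind + t₀ * c τ < u := by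
      have := hfP _ (hmem t₀ (le_max_left _ _))
      rwa [map_add, map_smul, smul_eq_mul] at this
    have : (u - f ind) / c τ * c τ ≤ t₀ * c τ :=
      mul_le_mul_of_nonneg_right (le_max_right _ _) hcτ.le
    rw [div_mul_cancel₀ _ (ne_of_gt hcτ)] at this
    linarith
  -- weights
  set w : Om → ℝ := fun τ => -c τ with hw
  have hwnn : ∀ τ, 0 ≤ w τ := by
    intro τ
    by_cases h : τ ∈ E
    · simp [hw]; linarith [hin τ h]
    · simp [hw, hout τ h]
  set W : ℝ := ∑ τ, w τ with hW
  have hWnn : 0 ≤ W := Finset.sum_nonneg fun τ _ => hwnn τ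
  have hWpos : 0 < W := by
    rcases hWnn.eq_or_lt with h | h
    · exfalso
      have hw0 : ∀ τ, w τ = 0 := by
        intro τ
        have := (Finset.sum_eq_zero_iff_of_nonneg (fun τ _ => hwnn τ)).mp h.symm
        exact this τ (Finset.mem_univ τ)
      have hf0 : ∀ x : Om → ℝ, f x = 0 := by
        intro x
        rw [hrepr x]
        apply Finset.sum_eq_zero
        intro τ _
        have : c τ = 0 := by have := hw0 τ; simp [hw] at this; linarith
        rw [this, mul_zero]
      have h1 : u ≤ 0 := by
        have := hfC _ (hdelta hS.choose hS.choose_spec)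
        rwa [hf0] at this
      have h2 : (0:ℝ) < u := by
        have := hfP (fun _ => 1) (fun τ _ => one_pos)
        rwa [hf0] at this
      linarith
    · exact h
  refine ⟨fun τ => w τ / W, ⟨fun τ => div_nonneg (hwnn τ) hWnn, ?_⟩, ?_, ?_⟩
  · rw [← Finset.sum_div, ← hW, div_self (ne_of_gt hWpos)]
  · intro τ hτ
    by_contra h
    have := hout τ h
    rw [hw] at hτ
    simp only [this, neg_zero, zero_div] at hτ
    exact lt_irrefl 0 hτ
  · intro s hs
    have hfA : 0 ≤ f (fun τ => A s τ) := le_trans hu0 (hfC _ (hdelta s hs))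
    rw [hrepr] at hfA
    have : ∑ τ, w τ / W * A s τ = (∑ τ, A s τ * c τ) * (-1 / W) := by
      rw [Finset.sum_mul]
      exact Finset.sum_congr rfl fun τ _ => by rw [hw]; ring
    rw [this]
    apply mul_nonpos_of_nonneg_of_nonpos hfA
    rw [div_nonpos_iff]
    right
    exact ⟨by norm_num, hWnn⟩

end Aux


/-- `σ` is not conditionally dominated on `Σ'` iff at each information set `I`
of player `i` that is reachable, `σ` is a best response conditional on reaching `I` to some
belief on `Σ'_{σ,I,-i}`. -/
theorem not_condDom_iff_conditional_best_response {n : ℕ} (G : ExtGame n) (i : Fin n)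
    (Ti : Set (G.PStrat i)) (T : Set (G.OppProf i)) (σ : G.PStrat i) (hσ : σ ∈ Ti) :
    ¬G.CondDom i σ T ↔
      ∀ c, G.IsInfo i c →
        G.ReachSet i σ c T = ∅ ∨
        ∃ μ : G.OppProf i → ℝ, IsDist μ ∧ (∀ τ, 0 < μ τ → τ ∈ G.ReachSet i σ c T) ∧
          ∀ σ' : G.PStrat i,
            (∀ c', G.IsInfo i c' → G.Precedes i c' c → σ'.val c' = σ.val c') →
            ∑ τ : G.OppProf i, μ τ * G.U i (G.combine i σ' τ) ≤
              ∑ τ : G.OppProf i, μ τ * G.U i (G.combine i σ τ) := by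
  classical
  constructor
  · -- not conditionally dominated → beliefs exist at each reachable information set
    intro hnd c hc
    rcases Set.eq_empty_or_nonempty (G.ReachSet i σ c T) with hE | hE
    · exact Or.inl hE
    right
    obtain ⟨τ₀, hτ₀⟩ := hE
    obtain ⟨P, hPpre, hPdec, hPlab⟩ := hτ₀.2
    have hMσ : G.MatchAt i σ P := G.matchAt_of_prefix_outcome i σ τ₀ P hPpre
    have hno : ¬ ∃ m : G.PStrat i → ℝ, IsDist m ∧
        (∀ s, 0 < m s → s ∈ {s : G.PStrat i | G.MatchAt i s P}) ∧
        ∀ τ ∈ G.ReachSet i σ c T,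
          0 < ∑ s, m s * (G.U i (G.combine i s τ) - G.U i (G.combine i σ τ)) := by
      rintro ⟨m, hmdist, hmsupp, hmpos⟩
      apply hnd
      refine ⟨c, hc, m, hmdist, ⟨τ₀, hτ₀.1, hτ₀.2, fun s hs =>
        G.reaches_of_matchAt i σ s c P hPdec hPlab (hmsupp s hs) τ₀ hτ₀.2⟩, ?_⟩
      intro τ hτ
      have hτE : τ ∈ G.ReachSet i σ c T := ⟨hτ.1, hτ.2.1⟩
      have hpos := hmpos τ hτE
      have hsum : ∑ s, m s * (G.U i (G.combine i s τ) - G.U i (G.combine i σ τ)) =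
          G.EUmixE i m τ - G.U i (G.combine i σ τ) := by
        simp only [mul_sub]
        rw [Finset.sum_sub_distrib, ← Finset.sum_mul, hmdist.2, one_mul]
        rfl
      rw [hsum] at hpos
      linarith
    obtain ⟨μ, hμdist, hμsupp, hμle⟩ :=
      pearce {s : G.PStrat i | G.MatchAt i s P} (G.ReachSet i σ c T)
        ⟨σ, hMσ⟩ ⟨τ₀, hτ₀⟩
        (fun s τ => G.U i (G.combine i s τ) - G.U i (G.combine i σ τ)) hno
    refine ⟨μ, hμdist, hμsupp, ?_⟩
    intro σ' hag
    have hMσ' : G.MatchAt i σ' P := G.matchAt_of_agree i σ σ' c P hPdec hPlab hMσ hag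
    have := hμle σ' hMσ'
    simp only [mul_sub] at this
    rw [Finset.sum_sub_distrib] at this
    linarith
  · -- beliefs exist everywhere → not conditionally dominated
    intro hyp hcd
    obtain ⟨c, hc, m, hmdist, ⟨τ₀, hτ₀⟩, hdom⟩ := hcd
    have hτ₀E : τ₀ ∈ G.ReachSet i σ c T := ⟨hτ₀.1, hτ₀.2.1⟩
    obtain ⟨P, hPpre, hPdec, hPlab⟩ := hτ₀.2.1
    have hMσ : G.MatchAt i σ P := G.matchAt_of_prefix_outcome i σ τ₀ P hPpre
    rcases hyp c hc with hE | ⟨μ, hμdist, hμsupp, hbest⟩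
    · rw [hE] at hτ₀E
      exact Set.notMem_empty τ₀ hτ₀E
    have hsm : ∀ s, 0 < m s → G.MatchAt i s P := fun s hs =>
      G.matchAt_of_reaches i s c P hPdec hPlab τ₀ (hτ₀.2.2 s hs)
    -- (a) the belief makes σ at least as good as the mixture
    have hA : ∑ τ, μ τ * G.EUmixE i m τ ≤
        ∑ τ, μ τ * G.U i (G.combine i σ τ) := by
      have swap : ∑ τ, μ τ * G.EUmixE i m τ =
          ∑ s, m s * ∑ τ, μ τ * G.U i (G.combine i s τ) := by
        calc ∑ τ, μ τ * G.EUmixE i m τ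
            = ∑ τ, ∑ s, m s * (μ τ * G.U i (G.combine i s τ)) := by
              refine Finset.sum_congr rfl fun τ _ => ?_
              simp only [ExtGame.EUmixE, Finset.mul_sum]
              exact Finset.sum_congr rfl fun s _ => by ring
          _ = ∑ s, ∑ τ, m s * (μ τ * G.U i (G.combine i s τ)) := Finset.sum_comm
          _ = ∑ s, m s * ∑ τ, μ τ * G.U i (G.combine i s τ) :=
              Finset.sum_congr rfl fun s _ => (Finset.mul_sum _ _ _).symm
      rw [swap]
      have each : ∀ s ∈ Finset.univ, m s * ∑ τ, μ τ * G.U i (G.combine i s τ) ≤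
          m s * ∑ τ, μ τ * G.U i (G.combine i σ τ) := by
        intro s _
        rcases (hmdist.1 s).eq_or_lt with h | h
        · rw [← h]; simp
        · refine mul_le_mul_of_nonneg_left ?_ (le_of_lt h)
          exact hbest s (G.agree_of_matchAt i σ s c P hPdec hPlab hMσ (hsm s h))
      calc ∑ s, m s * ∑ τ, μ τ * G.U i (G.combine i s τ)
          ≤ ∑ s, m s * ∑ τ, μ τ * G.U i (G.combine i σ τ) := Finset.sum_le_sum each
        _ = ∑ τ, μ τ * G.U i (G.combine i σ τ) := by
            rw [← Finset.sum_mul, hmdist.2, one_mul]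
    -- (b) but the domination makes the mixture strictly better
    have hgt : ∀ τ, 0 < μ τ → G.U i (G.combine i σ τ) < G.EUmixE i m τ := by
      intro τ hτ
      have hτE := hμsupp τ hτ
      exact hdom τ ⟨hτE.1, hτE.2, fun s hs =>
        G.reaches_of_matchAt i σ s c P hPdec hPlab (hsm s hs) τ hτE.2⟩
    have hex : ∃ τ, 0 < μ τ := by
      by_contra hno
      push_neg at hno
      have hz : ∀ τ ∈ Finset.univ, μ τ = 0 := fun τ _ =>
        le_antisymm (hno τ) (hμdist.1 τ)
      have h1 := hμdist.2
      rw [Finset.sum_eq_zero hz] at h1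
      norm_num at h1
    obtain ⟨τ', hτ'⟩ := hex
    have hB : 0 < ∑ τ, μ τ * (G.EUmixE i m τ - G.U i (G.combine i σ τ)) := by
      refine Finset.sum_pos' (fun τ _ => ?_) ⟨τ', Finset.mem_univ τ', ?_⟩
      · rcases (hμdist.1 τ).eq_or_lt with h | h
        · rw [← h]; simp
        · exact mul_nonneg h.le (by linarith [hgt τ h])
      · exact mul_pos hτ' (by linarith [hgt τ' hτ'])
    simp only [mul_sub] at hB
    rw [Finset.sum_sub_distrib] at hB
    linarith
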